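/- Let r ≥ 1 be an integer, K > 0, and for multi-indices μ, ν ∈ F with ν ≤ μ and ‖μ‖_∞ ≤ r, suppose |μ−ν| = ℓ implies μ!/ν! ≤ r^ℓ. Then for nonnegative reals ψ_j with ∑_j ρ_j ψ_j ≤ K pointwise and ∑_j ρ_j |∇ψ_j| ≤ K̂, the bound ∑_{ν∈S_μ} ε̂(μ,ν) ≤ √r K̂ e^{√r K} holds, where ε̂(μ,ν) := ∑_{j∈supp(μ−ν)} √(μ!/ν!) · (ρ^{μ−ν−e_j} |ψ|^{μ−ν−e_j}/(μ−ν−e_j)!) · ρ_j|∇ψ_j| and S_μ = {ν ≤ μ : ν ≠ μ}. -/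

import Mathlib

open scoped BigOperators

/-- Factorial of a multi-index: `ν! = ∏_j ν_j!`. -/
noncomputable def mfact (ν : ℕ →₀ ℕ) : ℝ := ν.prod fun _ n => (n.factorial : ℝ)

/-- `ρ^τ ψ^τ / τ! = ∏_j (ρ_j ψ_j)^{τ_j} / τ_j!`. -/
noncomputable def wpow (ρ ψ : ℕ → ℝ) (τ : ℕ →₀ ℕ) : ℝ :=
  τ.prod fun j n => (ρ j * ψ j) ^ n / (n.factorial : ℝ)

/-- The quantity `ε̂(μ,ν)` from the Hermite summability proof, with `φ_j` playing the
role of `|∇ψ_j|`. -/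
noncomputable def epshat (ρ ψ φ : ℕ → ℝ) (μ ν : ℕ →₀ ℕ) : ℝ :=
  ∑ j ∈ (μ - ν).support,
    Real.sqrt (mfact μ / mfact ν) * wpow ρ ψ (μ - ν - Finsupp.single j 1) * (ρ j * φ j)

private lemma sqrt_pow_eq {x : ℝ} (hx : 0 ≤ x) (n : ℕ) :
    Real.sqrt (x ^ n) = Real.sqrt x ^ n := by
  induction n with
  | zero => simp
  | succ n ih => rw [pow_succ, pow_succ, Real.sqrt_mul (pow_nonneg hx n), ih]

private lemma wpow_nonneg {ρ ψ : ℕ → ℝ} (hρ : ∀ j, 0 ≤ ρ j) (hψ : ∀ j, 0 ≤ ψ j)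
    (τ : ℕ →₀ ℕ) : 0 ≤ wpow ρ ψ τ :=
  Finset.prod_nonneg fun j _ =>
    div_nonneg (pow_nonneg (mul_nonneg (hρ j) (hψ j)) _) (Nat.cast_nonneg _)

private lemma gpow_eq (c : ℝ) (ρ ψ : ℕ → ℝ) (σ : ℕ →₀ ℕ) :
    c ^ (σ.sum fun _ n => n) * wpow ρ ψ σ
      = σ.prod fun j n => (c * (ρ j * ψ j)) ^ n / (n.factorial : ℝ) := by
  rw [wpow, Finsupp.sum, Finsupp.prod, Finsupp.prod,
    ← Finset.prod_pow_eq_pow_sum, ← Finset.prod_mul_distrib]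
  exact Finset.prod_congr rfl fun j _ => by rw [mul_pow, mul_pow]; ring

private lemma sum_Iic_prod (f : ℕ → ℕ → ℝ) (hf0 : ∀ j, f j 0 = 1) (μ : ℕ →₀ ℕ) :
    ∑ σ ∈ Finset.Iic μ, σ.prod f
      = μ.prod fun j m => ∑ n ∈ Finset.range (m + 1), f j n := by
  induction μ using Finsupp.induction with
  | zero =>
    have : Finset.Iic (0 : ℕ →₀ ℕ) = {0} := by
      ext σ; simp [Finset.mem_Iic, le_zero_iff]
    simp [this, Finsupp.prod_zero_index]
  | single_add j n g hj hn ih =>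
    have hgj : g j = 0 := Finsupp.notMem_support_iff.mp hj
    have key : ∑ σ ∈ Finset.Iic (Finsupp.single j n + g), σ.prod f
        = ∑ p ∈ (Finset.range (n + 1)) ×ˢ Finset.Iic g, f j p.1 * p.2.prod f := by
      refine Finset.sum_nbij' (fun σ => (σ j, σ.erase j))
        (fun p => Finsupp.single j p.1 + p.2) ?_ ?_ ?_ ?_ ?_
      · intro σ hσ
        rw [Finset.mem_Iic] at hσ
        have hσ' := Finsupp.le_def.mp hσ
        rw [Finset.mem_product, Finset.mem_range, Finset.mem_Iic]
        refine ⟨?_, ?_⟩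
        · show σ j < n + 1
          have := hσ' j
          simp [Finsupp.single_apply, hgj] at this
          omega
        · show σ.erase j ≤ g
          rw [Finsupp.le_def]
          intro k
          rcases eq_or_ne k j with rfl | hk
          · simp [Finsupp.erase_apply]
          · have := hσ' k
            simp only [Finsupp.coe_add, Pi.add_apply, Finsupp.single_apply,
              if_neg (Ne.symm hk)] at this
            simpa [Finsupp.erase_apply, hk] using this
      · rintro ⟨m, τ⟩ hp
        rw [Finset.mem_product, Finset.mem_range, Finset.mem_Iic] at hp
        obtain ⟨hm, hτ⟩ := hp
        rw [Finset.mem_Iic, Finsupp.le_def]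
        intro k
        have h2 : τ k ≤ g k := Finsupp.le_def.mp hτ k
        simp only [Finsupp.coe_add, Pi.add_apply]
        rcases eq_or_ne j k with rfl | hk
        · simp [Finsupp.single_apply, hgj]
          omega
        · simp [Finsupp.single_apply, hk]
          omega
      · intro σ _
        exact Finsupp.single_add_erase j σ
      · rintro ⟨m, τ⟩ hp
        rw [Finset.mem_product, Finset.mem_range, Finset.mem_Iic] at hp
        obtain ⟨hm, hτ⟩ := hp
        have hτj : τ j = 0 := by
          have h4 : τ j ≤ g j := Finsupp.le_def.mp hτ j
          omega
        have h1 : (Finsupp.single j m + τ) j = m := by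
          simp [Finsupp.single_apply, hτj]
        have h2 : (Finsupp.single j m + τ).erase j = τ := by
          rw [Finsupp.erase_add, Finsupp.erase_single, zero_add,
            Finsupp.erase_of_notMem_support (Finsupp.notMem_support_iff.mpr hτj)]
        show ((Finsupp.single j m + τ) j, (Finsupp.single j m + τ).erase j) = (m, τ)
        rw [h1, h2]
      · intro σ _
        have hd : Disjoint (Finsupp.single j (σ j)).support (σ.erase j).support := by
          refine Finset.disjoint_left.mpr fun k hk hk' => ?_
          have h1 : k = j := Finset.mem_singleton.mp (Finsupp.support_single_subset hk)
          subst h1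
          simp [Finsupp.mem_support_iff, Finsupp.erase_apply] at hk'
        show σ.prod f = f j (σ j) * (σ.erase j).prod f
        calc σ.prod f = ((Finsupp.single j (σ j)) + σ.erase j).prod f := by
              rw [Finsupp.single_add_erase]
          _ = (Finsupp.single j (σ j)).prod f * (σ.erase j).prod f :=
              Finsupp.prod_add_index_of_disjoint hd f
          _ = f j (σ j) * (σ.erase j).prod f := by
              rw [Finsupp.prod_single_index (hf0 j)]
    rw [key, Finset.sum_product]
    simp_rw [← Finset.mul_sum]
    rw [← Finset.sum_mul, ih]
    have hd : Disjoint (Finsupp.single j n).support g.support := by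
      refine Finset.disjoint_left.mpr fun k hk hk' => ?_
      have h1 : k = j := Finset.mem_singleton.mp (Finsupp.support_single_subset hk)
      subst h1
      exact hj hk'
    rw [Finsupp.prod_add_index_of_disjoint hd,
      Finsupp.prod_single_index (by simp [hf0 j])]

private lemma sum_Iic_le_exp (a : ℕ → ℝ) (ha : ∀ j, 0 ≤ a j) (μ : ℕ →₀ ℕ) :
    ∑ σ ∈ Finset.Iic μ, (σ.prod fun j m => a j ^ m / (m.factorial : ℝ))
      ≤ ∏ j ∈ μ.support, Real.exp (a j) := by
  rw [sum_Iic_prod _ (fun j => by simp) μ, Finsupp.prod]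
  refine Finset.prod_le_prod (fun j _ => Finset.sum_nonneg fun m _ =>
    div_nonneg (pow_nonneg (ha j) _) (Nat.cast_nonneg _)) fun j _ =>
    Real.sum_le_exp_of_nonneg (ha j) _

/-- Key combinatorial estimate (pointwise in `x ∈ D`) from the Hermite summability
proof: `∑_{ν ∈ S_μ} ε̂(μ,ν) ≤ √r K̂ e^{√r K}`. -/
theorem stmt13 (r : ℕ) (hr : 1 ≤ r) (K Khat : ℝ) (hK : 0 < K) (hKhat : 0 ≤ Khat)
    (ρ ψ φ : ℕ → ℝ) (hρ : ∀ j, 0 < ρ j) (hψ : ∀ j, 0 ≤ ψ j) (hφ : ∀ j, 0 ≤ φ j)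
    (hψsum : Summable fun j => ρ j * ψ j) (hψK : ∑' j, ρ j * ψ j ≤ K)
    (hφsum : Summable fun j => ρ j * φ j) (hφK : ∑' j, ρ j * φ j ≤ Khat)
    (μ : ℕ →₀ ℕ) (hμ : ∀ j, μ j ≤ r)
    (hfact : ∀ ν : ℕ →₀ ℕ, ν ≤ μ →
      mfact μ / mfact ν ≤ (r : ℝ) ^ ((μ - ν).sum fun _ n => n)) :
    ∑ ν ∈ Finset.Iio μ, epshat ρ ψ φ μ ν
      ≤ Real.sqrt r * Khat * Real.exp (Real.sqrt r * K) := by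
  set c : ℝ := Real.sqrt r with hcdef
  have hc0 : 0 ≤ c := Real.sqrt_nonneg _
  set a : ℕ → ℝ := fun j => c * (ρ j * ψ j) with hadef
  have ha0 : ∀ j, 0 ≤ a j := fun j => mul_nonneg hc0 (mul_nonneg (hρ j).le (hψ j))
  set g : (ℕ →₀ ℕ) → ℝ := fun σ => σ.prod fun j m => a j ^ m / (m.factorial : ℝ)
    with hgdef
  have hg0 : ∀ σ, 0 ≤ g σ := fun σ => Finset.prod_nonneg fun j _ =>
    div_nonneg (pow_nonneg (ha0 j) _) (Nat.cast_nonneg _)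
  have hgw : ∀ σ : ℕ →₀ ℕ, c ^ (σ.sum fun _ n => n) * wpow ρ ψ σ = g σ := fun σ =>
    gpow_eq c ρ ψ σ
  -- bound on T
  have hT : ∑ σ ∈ Finset.Iic μ, g σ ≤ Real.exp (c * K) := by
    refine (sum_Iic_le_exp a ha0 μ).trans ?_
    rw [← Real.exp_sum]
    refine Real.exp_le_exp.mpr ?_
    calc ∑ j ∈ μ.support, a j ≤ ∑' j, a j :=
          Summable.sum_le_tsum _ (fun j _ => ha0 j) (hψsum.mul_left c)
      _ = c * ∑' j, ρ j * ψ j := tsum_mul_left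
      _ ≤ c * K := mul_le_mul_of_nonneg_left hψK hc0
  have hT0 : 0 ≤ ∑ σ ∈ Finset.Iic μ, g σ := Finset.sum_nonneg fun σ _ => hg0 σ
  set B : (ℕ →₀ ℕ) → ℕ → ℝ := fun ν j =>
    c ^ ((μ - ν).sum fun _ n => n) * wpow ρ ψ (μ - ν - Finsupp.single j 1) * (ρ j * φ j)
    with hBdef
  have hB0 : ∀ ν j, 0 ≤ B ν j := fun ν j =>
    mul_nonneg (mul_nonneg (pow_nonneg hc0 _) (wpow_nonneg (fun k => (hρ k).le) hψ _))
      (mul_nonneg (hρ j).le (hφ j))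
  have hsupp : ∀ ν : ℕ →₀ ℕ, (μ - ν).support
      = μ.support.filter fun j => ν j < μ j := by
    intro ν
    ext j
    simp only [Finsupp.mem_support_iff, Finset.mem_filter, Finsupp.tsub_apply]
    omega
  calc ∑ ν ∈ Finset.Iio μ, epshat ρ ψ φ μ ν
      ≤ ∑ ν ∈ Finset.Iio μ, ∑ j ∈ (μ - ν).support, B ν j := by
        refine Finset.sum_le_sum fun ν hν => Finset.sum_le_sum fun j _ => ?_
        have hνμ : ν ≤ μ := le_of_lt (Finset.mem_Iio.mp hν)
        have h1 : Real.sqrt (mfact μ / mfact ν) ≤ c ^ ((μ - ν).sum fun _ n => n) := by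
          rw [hcdef, ← sqrt_pow_eq (Nat.cast_nonneg r)]
          exact Real.sqrt_le_sqrt (hfact ν hνμ)
        exact mul_le_mul_of_nonneg_right
          (mul_le_mul_of_nonneg_right h1 (wpow_nonneg (fun k => (hρ k).le) hψ _))
          (mul_nonneg (hρ j).le (hφ j))
    _ ≤ ∑ ν ∈ Finset.Iic μ, ∑ j ∈ (μ - ν).support, B ν j :=
        Finset.sum_le_sum_of_subset_of_nonneg Finset.Iio_subset_Iic_self
          fun ν _ _ => Finset.sum_nonneg fun j _ => hB0 ν j
    _ = ∑ j ∈ μ.support, ∑ ν ∈ Finset.Iic μ, if ν j < μ j then B ν j else 0 := by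
        rw [Finset.sum_comm]
        exact Finset.sum_congr rfl fun ν _ => by
          rw [hsupp ν, Finset.sum_filter]
    _ = ∑ j ∈ μ.support, ∑ ν ∈ (Finset.Iic μ).filter (fun ν => ν j < μ j), B ν j := by
        exact Finset.sum_congr rfl fun j _ => (Finset.sum_filter _ _).symm
    _ = ∑ j ∈ μ.support,
        ∑ σ ∈ Finset.Iic (μ - Finsupp.single j 1), c * (ρ j * φ j) * g σ := by
        refine Finset.sum_congr rfl fun j hj => ?_
        have hμj : 1 ≤ μ j := Nat.one_le_iff_ne_zero.mpr (Finsupp.mem_support_iff.mp hj)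
        refine Finset.sum_nbij' (fun ν => μ - ν - Finsupp.single j 1)
          (fun σ => μ - Finsupp.single j 1 - σ) ?_ ?_ ?_ ?_ ?_
        · intro ν hν
          rw [Finset.mem_filter, Finset.mem_Iic] at hν
          rw [Finset.mem_Iic, Finsupp.le_def]
          intro k
          simp only [Finsupp.tsub_apply]
          omega
        · intro σ hσ
          rw [Finset.mem_Iic] at hσ
          have hσ' := Finsupp.le_def.mp hσ
          rw [Finset.mem_filter, Finset.mem_Iic]
          constructor
          · rw [Finsupp.le_def]
            intro k
            simp only [Finsupp.tsub_apply]
            omega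
          · have := hσ' j
            simp only [Finsupp.tsub_apply, Finsupp.single_eq_same] at this ⊢
            omega
        · intro ν hν
          rw [Finset.mem_filter, Finset.mem_Iic] at hν
          have h1 := Finsupp.le_def.mp hν.1
          ext k
          rcases eq_or_ne j k with rfl | hk
          · have := h1 j; have := hν.2
            simp only [Finsupp.tsub_apply, Finsupp.single_eq_same]
            omega
          · have := h1 k
            simp only [Finsupp.tsub_apply, Finsupp.single_apply, if_neg hk]
            omega
        · intro σ hσ
          rw [Finset.mem_Iic] at hσ
          have h1 := Finsupp.le_def.mp hσ
          ext k
          have := h1 k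
          rcases eq_or_ne j k with rfl | hk
          · simp only [Finsupp.tsub_apply, Finsupp.single_eq_same] at this ⊢
            omega
          · simp only [Finsupp.tsub_apply, Finsupp.single_apply, if_neg hk] at this ⊢
            omega
        · intro ν hν
          rw [Finset.mem_filter, Finset.mem_Iic] at hν
          have h1 := Finsupp.le_def.mp hν.1
          set σ := μ - ν - Finsupp.single j 1 with hσdef
          have hsplit : μ - ν = σ + Finsupp.single j 1 := by
            ext k
            have := h1 k
            rcases eq_or_ne j k with rfl | hk
            · have := hν.2
              simp only [hσdef, Finsupp.coe_add, Pi.add_apply, Finsupp.tsub_apply,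
                Finsupp.single_eq_same]
              omega
            · simp only [hσdef, Finsupp.coe_add, Pi.add_apply, Finsupp.tsub_apply,
                Finsupp.single_apply, if_neg hk]
              omega
          have hsum : ((μ - ν).sum fun _ n => n) = (σ.sum fun _ n => n) + 1 := by
            rw [hsplit, Finsupp.sum_add_index' (fun _ => rfl) (fun _ _ _ => rfl),
              Finsupp.sum_single_index rfl]
          rw [hBdef]
          simp only
          rw [hsum, pow_succ, ← hgw σ, ← hσdef]
          ring
    _ ≤ ∑ j ∈ μ.support, c * (ρ j * φ j) * ∑ σ ∈ Finset.Iic μ, g σ := by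
        refine Finset.sum_le_sum fun j _ => ?_
        rw [← Finset.mul_sum]
        refine mul_le_mul_of_nonneg_left ?_
          (mul_nonneg hc0 (mul_nonneg (hρ j).le (hφ j)))
        exact Finset.sum_le_sum_of_subset_of_nonneg
          (Finset.Iic_subset_Iic.mpr tsub_le_self) fun σ _ _ => hg0 σ
    _ = (∑ j ∈ μ.support, ρ j * φ j) * (c * ∑ σ ∈ Finset.Iic μ, g σ) := by
        rw [Finset.sum_mul]
        exact Finset.sum_congr rfl fun j _ => by ring
    _ ≤ Khat * (c * Real.exp (c * K)) := by
        refine mul_le_mul ?_ ?_ (mul_nonneg hc0 hT0) hKhat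
        · calc ∑ j ∈ μ.support, ρ j * φ j ≤ ∑' j, ρ j * φ j :=
              Summable.sum_le_tsum _ (fun j _ => mul_nonneg (hρ j).le (hφ j)) hφsum
            _ ≤ Khat := hφK
        · exact mul_le_mul_of_nonneg_left hT hc0
    _ = Real.sqrt r * Khat * Real.exp (Real.sqrt r * K) := by rw [hcdef]; ring
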